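/- arXiv:2206.10735 — 5 statements merged into one kernel-verified Lean document; each statement's English description precedes it below -/
import Mathlib

section
/- For integers n ≥ 0, q ≥ 2, and 0 ≤ j ≤ n, ∑_{k=0}^{n(q-1)} (C^{(q)}_{k,n})^2 ≥ ∑_{k=0}^{(n-j)(q-1)} C^{(q)}_{k,n+j} · C^{(q)}_{k,n-j}. -/
open Polynomial Finset

noncomputable def P (q : ℕ) : Polynomial ℕ := ∑ i ∈ Finset.range q, (X : Polynomial ℕ) ^ i

lemma coeffP (q k : ℕ) : (P q).coeff k = if k < q then 1 else 0 := by
  unfold P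
  rw [Polynomial.finset_sum_coeff]
  simp only [Polynomial.coeff_X_pow]
  rw [Finset.sum_ite_eq (Finset.range q) k (fun _ => 1)]
  simp

lemma natDegP (q : ℕ) : (P q).natDegree ≤ q - 1 := by
  apply Polynomial.natDegree_sum_le_of_forall_le
  intro i hi
  simpa using Nat.le_sub_one_of_lt (Finset.mem_range.mp hi)

lemma natDegPpow (q m : ℕ) : ((P q)^m).natDegree ≤ m * (q-1) :=
  (Polynomial.natDegree_pow_le).trans (Nat.mul_le_mul_left m (natDegP q))

lemma reflectP (q : ℕ) (hq : 1 ≤ q) : Polynomial.reflect (q-1) (P q) = P q := by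
  ext i
  rw [Polynomial.coeff_reflect, coeffP, coeffP]
  rcases le_or_gt i (q-1) with h | h
  · rw [Polynomial.revAt_le h]; have : q - 1 - i < q := by omega
    have h2 : i < q := by omega
    simp [this, h2]
  · rw [Polynomial.revAt_eq_self_of_lt h]

lemma reflectPpow (q m : ℕ) (hq : 1 ≤ q) :
    Polynomial.reflect (m * (q-1)) ((P q)^m) = (P q)^m := by
  induction m with
  | zero => simp
  | succ m ih =>
    have : (P q)^(m+1) = (P q)^m * P q := pow_succ _ _
    rw [this, show (m+1)*(q-1) = m*(q-1) + (q-1) by ring,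
      Polynomial.reflect_mul _ _ (natDegPpow q m) (natDegP q), ih, reflectP q hq]

lemma symmP (q m k : ℕ) (hq : 1 ≤ q) (hk : k ≤ m * (q-1)) :
    ((P q)^m).coeff (m*(q-1) - k) = ((P q)^m).coeff k := by
  conv_lhs => rw [← reflectPpow q m hq]
  rw [Polynomial.coeff_reflect, Polynomial.revAt_le (Nat.sub_le _ _)]
  congr 1; omega

lemma step_sq (a : ℕ → ℕ) (s d M : ℕ) (hM : s + d = M) :
    ∑ k ∈ Finset.range (s+1), a k * a (d+k) ≤ ∑ k ∈ Finset.range (M+1), (a k)^2 := by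
  have h2 : 2 * ∑ k ∈ Finset.range (s+1), a k * a (d+k)
      ≤ 2 * ∑ k ∈ Finset.range (M+1), (a k)^2 := by
    rw [Finset.mul_sum]
    calc ∑ k ∈ Finset.range (s+1), 2 * (a k * a (d+k))
        ≤ ∑ k ∈ Finset.range (s+1), ((a k)^2 + (a (d+k))^2) := by
          apply Finset.sum_le_sum
          intro k _
          have := two_mul_le_add_sq (a k) (a (d+k))
          nlinarith [this]
      _ = (∑ k ∈ Finset.range (s+1), (a k)^2) + ∑ k ∈ Finset.range (s+1), (a (d+k))^2 :=
          Finset.sum_add_distrib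
      _ ≤ (∑ k ∈ Finset.range (M+1), (a k)^2) + ∑ k ∈ Finset.range (M+1), (a k)^2 := by
          gcongr ?_ + ?_
          · exact Finset.sum_le_sum_of_subset (Finset.range_subset_range.mpr (by omega))
          · have : ∑ k ∈ Finset.range (s+1), (a (d+k))^2
                = ∑ k ∈ Finset.Ico d (M+1), (a k)^2 := by
              rw [Finset.sum_Ico_eq_sum_range]
              have hrange : M + 1 - d = s + 1 := by omega
              rw [hrange]
            rw [this]
            apply Finset.sum_le_sum_of_subset
            intro x hx; simp at hx ⊢; omega
      _ = 2 * ∑ k ∈ Finset.range (M+1), (a k)^2 := (two_mul _).symm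
  exact Nat.le_of_mul_le_mul_left h2 (by norm_num)


/-- `qPascal q k m` is the coefficient of `x^k` in `(1 + x + ⋯ + x^(q-1))^m`. -/
noncomputable def qPascal (q k m : ℕ) : ℕ :=
  ((∑ i ∈ Finset.range q, (Polynomial.X : Polynomial ℕ) ^ i) ^ m).coeff k

theorem qPascal_sum_sq_ge (q n j : ℕ) (hq : 2 ≤ q) (hj : j ≤ n) :
    ∑ k ∈ Finset.range ((n - j) * (q - 1) + 1),
        qPascal q k (n + j) * qPascal q k (n - j) ≤
      ∑ k ∈ Finset.range (n * (q - 1) + 1), (qPascal q k n) ^ 2 := by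
  have hq1 : 1 ≤ q := by omega
  have hqP : ∀ k m, qPascal q k m = ((P q)^m).coeff k := fun k m => rfl
  set e := q - 1 with he
  set s := (n - j) * e with hs
  set M := n * e with hM
  set d := j * e with hd
  have hsdM : s + d = M := by
    calc s + d = (n-j)*e + j*e := by rw [hs, hd]
      _ = (n-j+j)*e := (Nat.add_mul _ _ _).symm
      _ = n*e := by rw [Nat.sub_add_cancel hj]
      _ = M := hM.symm
  -- Step A: LHS = coeff_s (P^(2n))
  have stepA : ∑ k ∈ Finset.range (s + 1), qPascal q k (n + j) * qPascal q k (n - j)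
      = ((P q)^(2*n)).coeff s := by
    have h2n : (P q)^(2*n) = (P q)^(n+j) * (P q)^(n-j) := by
      rw [← pow_add]; congr 1; omega
    rw [h2n, Polynomial.coeff_mul, Finset.Nat.sum_antidiagonal_eq_sum_range_succ_mk]
    apply Finset.sum_congr rfl
    intro k hk
    simp only [hqP]
    congr 1
    have hk' : k ≤ s := by simpa using Nat.lt_succ_iff.mp (Finset.mem_range.mp hk)
    have := symmP q (n-j) k hq1 (by rw [hs] at hk'; exact hk')
    rw [← this]
  -- Step B: coeff_s (P^(2n)) = ∑ a_k * a_(d+k)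
  have stepB : ((P q)^(2*n)).coeff s
      = ∑ k ∈ Finset.range (s + 1), ((P q)^n).coeff k * ((P q)^n).coeff (d + k) := by
    have h2n : (P q)^(2*n) = (P q)^n * (P q)^n := by rw [← pow_add]; congr 1; omega
    rw [h2n, Polynomial.coeff_mul, Finset.Nat.sum_antidiagonal_eq_sum_range_succ_mk]
    apply Finset.sum_congr rfl
    intro k hk
    congr 1
    have hk' : k ≤ s := Nat.lt_succ_iff.mp (Finset.mem_range.mp hk)
    have hle : s - k ≤ M := by omega
    have := symmP q n (s - k) hq1 (by rw [← hM]; exact hle)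
    rw [← hM] at this
    rw [← this]
    congr 1
    omega
  rw [stepA, stepB]
  simp only [hqP]
  exact step_sq (fun k => ((P q)^n).coeff k) s d M hsdM
end

section
/- For n ≥ 1 and q ≥ 2 such that n(q-1) is even, the central coefficient of the n-th row of the q-ary Pascal's triangle satisfies C^{(q)}_{n(q-1)/2,n} ≤ q^{n-1}. -/
lemma sum_coeff_le_eval_one (g : Polynomial ℕ) (k : ℕ) :
    ∑ j ∈ Finset.range (k + 1), g.coeff j ≤ g.eval 1 := by
  set N := max (k + 1) (g.natDegree + 1) with hN
  have h1 : ∑ j ∈ Finset.range (k + 1), g.coeff j ≤ ∑ j ∈ Finset.range N, g.coeff j :=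
    Finset.sum_le_sum_of_subset (Finset.range_subset_range.2 (le_max_left _ _))
  have h2 : g.eval 1 = ∑ j ∈ Finset.range N, g.coeff j := by
    rw [Polynomial.eval_eq_sum_range' (n := N) (lt_of_lt_of_le (Nat.lt_succ_self _) (le_max_right _ _))]
    simp
  omega

lemma geom_coeff_le_one (q a : ℕ) :
    ((∑ i ∈ Finset.range q, (Polynomial.X : Polynomial ℕ) ^ i)).coeff a ≤ 1 := by
  rw [Polynomial.finset_sum_coeff]
  simp only [Polynomial.coeff_X_pow]
  rw [Finset.sum_ite_eq (Finset.range q) a (fun _ => 1)]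
  split <;> simp

theorem qPascal_central_le (q n : ℕ) (hq : 2 ≤ q) (hn : 1 ≤ n)
    (he : Even (n * (q - 1))) :
    qPascal q (n * (q - 1) / 2) n ≤ q ^ (n - 1) := by
  obtain ⟨m, rfl⟩ : ∃ m, n = m + 1 := ⟨n - 1, (Nat.succ_pred_eq_of_pos hn).symm⟩
  set k := (m + 1) * (q - 1) / 2
  set f := ∑ i ∈ Finset.range q, (Polynomial.X : Polynomial ℕ) ^ i with hf
  set g := f ^ m with hg
  have hco : qPascal q k (m + 1) = (f * g).coeff k := by
    rw [qPascal, hg, ← pow_succ']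
  rw [hco, Polynomial.coeff_mul]
  have h1 : ∑ p ∈ Finset.HasAntidiagonal.antidiagonal k, f.coeff p.1 * g.coeff p.2 ≤
      ∑ p ∈ Finset.HasAntidiagonal.antidiagonal k, g.coeff p.2 := by
    apply Finset.sum_le_sum
    intro p _
    calc f.coeff p.1 * g.coeff p.2 ≤ 1 * g.coeff p.2 :=
          Nat.mul_le_mul_right _ (geom_coeff_le_one q p.1)
      _ = g.coeff p.2 := one_mul _
  have h2 : ∑ p ∈ Finset.HasAntidiagonal.antidiagonal k, g.coeff p.2 =
      ∑ j ∈ Finset.range (k + 1), g.coeff j := by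
    rw [Finset.Nat.sum_antidiagonal_eq_sum_range_succ (fun a b => g.coeff b)]
    exact Finset.sum_range_reflect (fun j => g.coeff j) (k + 1)
  have h3 : g.eval 1 = q ^ m := by
    rw [hg, Polynomial.eval_pow, hf]
    simp
  calc ∑ p ∈ Finset.HasAntidiagonal.antidiagonal k, f.coeff p.1 * g.coeff p.2
      ≤ ∑ j ∈ Finset.range (k + 1), g.coeff j := h2 ▸ h1
    _ ≤ g.eval 1 := sum_coeff_le_eval_one g k
    _ = q ^ m := h3
    _ = q ^ (m + 1 - 1) := by simp
end

section
/- Let z ∈ {-1,0,1}^n have w ≥ 1 nonzero entries, and let r be a uniformly random vector in {0,...,q-1}^n. Then Pr[⟨r,z⟩ = 0] ≤ 1/q. -/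
theorem prob_inner_zero_le {n q : ℕ} (hq : 2 ≤ q) (z : Fin n → ℤ)
    (hz : ∀ j, z j = -1 ∨ z j = 0 ∨ z j = 1)
    (hw : 1 ≤ (Finset.univ.filter (fun j => z j ≠ 0)).card) :
    ((Finset.univ.filter
        (fun r : Fin n → Fin q => ∑ i, (r i : ℤ) * z i = 0)).card : ℝ) /
      (q : ℝ) ^ n ≤ 1 / q := by
  haveI : NeZero q := ⟨by omega⟩
  obtain ⟨j, hj⟩ : ∃ j, z j ≠ 0 := by
    obtain ⟨j, hj⟩ := Finset.card_pos.mp hw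
    exact ⟨j, (Finset.mem_filter.mp hj).2⟩
  set S := Finset.univ.filter
      (fun r : Fin n → Fin q => ∑ i, (r i : ℤ) * z i = 0) with hS
  have key : q * S.card ≤ q ^ n := by
    have hinj : Set.InjOn
        (fun p : Fin q × (Fin n → Fin q) => Function.update p.2 j (p.2 j + p.1))
        ((Finset.univ ×ˢ S) : Finset (Fin q × (Fin n → Fin q))) := by
      rintro ⟨a, r⟩ hr ⟨b, s⟩ hs hfeq
      simp only [Finset.coe_product, Set.mem_prod, Finset.mem_coe, hS,
        Finset.mem_filter, Finset.mem_univ, true_and] at hr hs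
      have hne : ∀ i, i ≠ j → r i = s i := by
        intro i hi
        have := congrFun hfeq i
        simpa [Function.update, hi] using this
      have hrs : r = s := by
        funext i
        by_cases hi : i = j
        · subst hi
          have hsum : (r i : ℤ) * z i - (s i : ℤ) * z i = 0 := by
            have : ∑ k, ((r k : ℤ) * z k - (s k : ℤ) * z k) = 0 := by
              rw [Finset.sum_sub_distrib, hr, hs]; ring
            rw [← this]
            rw [Finset.sum_eq_single i]
            · intro k _ hk
              rw [hne k hk]; ring
            · intro h; exact absurd (Finset.mem_univ i) h
          have hzj : (r i : ℤ) = (s i : ℤ) := by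
            rcases hz i with h | h | h
            · rw [h] at hsum; linarith
            · exact absurd h hj
            · rw [h] at hsum; linarith
          exact Fin.ext (by exact_mod_cast hzj)
        · exact hne i hi
      subst hrs
      have := congrFun hfeq j
      simp only [Function.update_self] at this
      have hab : a = b := add_left_cancel this
      simp [Prod.ext_iff, hab]
    have hcard := Finset.card_le_card_of_injOn _ (fun _ _ => Finset.mem_univ _) hinj
    simpa [Finset.card_product, Fintype.card_fun, mul_comm] using hcard
  have hq0 : (0:ℝ) < q := by positivity
  rw [div_le_div_iff₀ (by positivity) hq0]
  have : (S.card : ℝ) * q ≤ (q:ℝ) ^ n := by exact_mod_cast (by linarith [key] : S.card * q ≤ q ^ n)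
  linarith
end

section
/- For any 0 ≤ t < k/2, the number of integer vectors obtainable as M·u + e with u ∈ {0,1}^n and wt(e) ≤ t, where each coordinate of M·u lies in a fixed interval of length L, is at most L^k · ∑_{i=0}^{t} binom(k,i)·(n+1)^i; consequently, if all 2^n binary vectors u are to be distinguishable one needs L^k ∑_{i=0}^{t} binom(k,i) (n+1)^i ≥ 2^n. -/
open Pointwise


/-- Hamming weight of an integer vector: the number of nonzero entries. -/
def wtZ {k : ℕ} (e : Fin k → ℤ) : ℕ :=
  (Finset.univ.filter (fun i => e i ≠ 0)).card

theorem counting_converse_bound {n k t L : ℕ} (ht : 2 * t < k)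
    (M : Fin k → Fin n → ℤ) (a : Fin k → ℤ) (E : Finset ℤ)
    (hE0 : (0 : ℤ) ∈ E) (hEcard : E.card ≤ n + 1)
    (hrange : ∀ u : Fin n → ℕ, (∀ j, u j ≤ 1) →
      ∀ i, (∑ j, M i j * u j) ∈ Finset.Ico (a i) (a i + L)) :
    ({w : Fin k → ℤ | ∃ u : Fin n → ℕ, ∃ e : Fin k → ℤ,
        (∀ j, u j ≤ 1) ∧ wtZ e ≤ t ∧ (∀ i, e i ∈ E) ∧
        w = fun i => (∑ j, M i j * u j) + e i}.ncard
      ≤ L ^ k * ∑ i ∈ Finset.range (t + 1), k.choose i * (n + 1) ^ i) ∧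
    ((∀ u₁ u₂ : Fin n → ℕ, (∀ j, u₁ j ≤ 1) → (∀ j, u₂ j ≤ 1) →
        ∀ e₁ e₂ : Fin k → ℤ, wtZ e₁ ≤ t → wtZ e₂ ≤ t →
          (fun i => (∑ j, M i j * u₁ j) + e₁ i) =
            (fun i => (∑ j, M i j * u₂ j) + e₂ i) → u₁ = u₂) →
      2 ^ n ≤ L ^ k * ∑ i ∈ Finset.range (t + 1), k.choose i * (n + 1) ^ i) := by
  classical
  set W := {w : Fin k → ℤ | ∃ u : Fin n → ℕ, ∃ e : Fin k → ℤ,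
        (∀ j, u j ≤ 1) ∧ wtZ e ≤ t ∧ (∀ i, e i ∈ E) ∧
        w = fun i => (∑ j, M i j * u j) + e i} with hW
  set Sets : Finset (Finset (Fin k)) :=
    Finset.univ.powerset.filter (fun S => S.card ≤ t) with hSets
  set F : Finset (Fin k → ℤ) :=
    Sets.biUnion (fun S => Fintype.piFinset fun i =>
      if i ∈ S then Finset.Ico (a i) (a i + L) + E else Finset.Ico (a i) (a i + L)) with hF
  have hIcoCard : ∀ i : Fin k, (Finset.Ico (a i) (a i + (L:ℤ))).card = L := by
    intro i
    rw [Int.card_Ico]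
    simp
  -- W ⊆ F
  have hsub : W ⊆ ↑F := by
    rintro w ⟨u, e, hu, he, heE, rfl⟩
    rw [Finset.mem_coe, hF, Finset.mem_biUnion]
    refine ⟨Finset.univ.filter (fun i => e i ≠ 0), ?_, ?_⟩
    · simp only [hSets, Finset.mem_filter, Finset.mem_powerset]
      exact ⟨Finset.subset_univ _, he⟩
    · rw [Fintype.mem_piFinset]
      intro i
      by_cases hi : e i = 0
      · rw [if_neg (by simp [hi])]
        simpa [hi] using hrange u hu i
      · rw [if_pos (by simp [hi])]
        exact Finset.add_mem_add (hrange u hu i) (heE i)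
  -- cardinality of F
  have hFcard : F.card ≤ L ^ k * ∑ i ∈ Finset.range (t + 1), k.choose i * (n + 1) ^ i := by
    calc F.card ≤ ∑ S ∈ Sets, (Fintype.piFinset fun i =>
          if i ∈ S then Finset.Ico (a i) (a i + (L:ℤ)) + E else Finset.Ico (a i) (a i + L)).card :=
          Finset.card_biUnion_le
    _ ≤ ∑ S ∈ Sets, L ^ k * (n + 1) ^ S.card := by
        refine Finset.sum_le_sum ?_
        intro S hS
        rw [Fintype.card_piFinset]
        have hsplit : (∏ i ∈ S, (if i ∈ S then Finset.Ico (a i) (a i + (L:ℤ)) + E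
              else Finset.Ico (a i) (a i + L)).card) *
            (∏ i ∈ Sᶜ, (if i ∈ S then Finset.Ico (a i) (a i + (L:ℤ)) + E
              else Finset.Ico (a i) (a i + L)).card) =
            ∏ i, (if i ∈ S then Finset.Ico (a i) (a i + (L:ℤ)) + E
              else Finset.Ico (a i) (a i + L)).card := Finset.prod_mul_prod_compl S _
        rw [← hsplit]
        have h1 : (∏ i ∈ S, (if i ∈ S then Finset.Ico (a i) (a i + (L:ℤ)) + E
              else Finset.Ico (a i) (a i + L)).card) ≤ (L * (n + 1)) ^ S.card := by
          rw [← Finset.prod_const]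
          refine Finset.prod_le_prod' ?_
          intro i hi
          rw [if_pos hi]
          calc (Finset.Ico (a i) (a i + (L:ℤ)) + E).card
              ≤ (Finset.Ico (a i) (a i + (L:ℤ))).card * E.card := Finset.card_add_le
            _ ≤ L * (n + 1) := by rw [hIcoCard i]; exact Nat.mul_le_mul_left _ hEcard
        have h2 : (∏ i ∈ Sᶜ, (if i ∈ S then Finset.Ico (a i) (a i + (L:ℤ)) + E
              else Finset.Ico (a i) (a i + L)).card) = L ^ (Sᶜ).card := by
          rw [← Finset.prod_const]
          refine Finset.prod_congr rfl ?_
          intro i hi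
          rw [if_neg (by simpa using hi), hIcoCard i]
        rw [h2]
        calc (∏ i ∈ S, (if i ∈ S then Finset.Ico (a i) (a i + (L:ℤ)) + E
              else Finset.Ico (a i) (a i + L)).card) * L ^ (Sᶜ).card
            ≤ (L * (n + 1)) ^ S.card * L ^ (Sᶜ).card := Nat.mul_le_mul_right _ h1
          _ = L ^ k * (n + 1) ^ S.card := by
              rw [mul_pow, Finset.card_compl]
              have hSk : S.card ≤ k := by
                simpa using Finset.card_le_card (Finset.subset_univ S)
              rw [mul_assoc, mul_comm ((n+1)^S.card), ← mul_assoc, ← pow_add]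
              congr 2
              simp only [Fintype.card_fin]
              omega
    _ = ∑ i ∈ Finset.range (t + 1), ∑ S ∈ Finset.powersetCard i (Finset.univ : Finset (Fin k)),
          L ^ k * (n + 1) ^ S.card := by
        rw [← Finset.sum_biUnion]
        · apply Finset.sum_congr
          · ext S
            simp only [hSets, Finset.mem_filter, Finset.mem_powerset, Finset.mem_biUnion,
              Finset.mem_range, Finset.mem_powersetCard]
            constructor
            · rintro ⟨h1, h2⟩; exact ⟨S.card, by omega, h1, rfl⟩
            · rintro ⟨i, hi, h1, rfl⟩; exact ⟨h1, by omega⟩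
          · intros; rfl
        · intro i hi j hj hij
          simp only [Function.onFun, Finset.disjoint_left]
          intro S hS hS'
          rw [Finset.mem_powersetCard] at hS hS'
          exact hij (hS.2 ▸ hS'.2 ▸ rfl)
    _ = L ^ k * ∑ i ∈ Finset.range (t + 1), k.choose i * (n + 1) ^ i := by
        rw [Finset.mul_sum]
        refine Finset.sum_congr rfl ?_
        intro i hi
        rw [Finset.sum_congr rfl (fun S hS => by
          rw [(Finset.mem_powersetCard.mp hS).2]), Finset.sum_const,
          Finset.card_powersetCard, Finset.card_univ, Fintype.card_fin, smul_eq_mul]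
        ring
  have hWfin : W.Finite := Set.Finite.subset F.finite_toSet hsub
  have hWn : W.ncard ≤ L ^ k * ∑ i ∈ Finset.range (t + 1), k.choose i * (n + 1) ^ i := by
    calc W.ncard ≤ (↑F : Set (Fin k → ℤ)).ncard :=
        Set.ncard_le_ncard hsub F.finite_toSet
      _ = F.card := Set.ncard_coe_finset F
      _ ≤ _ := hFcard
  refine ⟨hWn, ?_⟩
  intro hinj
  -- injection from binary vectors
  set D : Finset (Fin n → ℕ) := Fintype.piFinset (fun _ => ({0, 1} : Finset ℕ)) with hD
  have hDcard : D.card = 2 ^ n := by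
    rw [Fintype.card_piFinset]
    simp
  have hDmem : ∀ u ∈ D, ∀ j, u j ≤ 1 := by
    intro u hu j
    have := (Fintype.mem_piFinset.mp hu) j
    simp only [Finset.mem_insert, Finset.mem_singleton] at this
    omega
  have hwt0 : wtZ (fun _ : Fin k => (0:ℤ)) = 0 := by
    simp [wtZ]
  have hmaps : ∀ u ∈ D, (fun i => ∑ j, M i j * u j) ∈ hWfin.toFinset := by
    intro u hu
    rw [Set.Finite.mem_toFinset]
    exact ⟨u, fun _ => 0, hDmem u hu, by rw [hwt0]; omega, fun _ => hE0,
      by funext i; simp⟩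
  have hinjOn : Set.InjOn (fun (u : Fin n → ℕ) => (fun i => ∑ j, M i j * u j : Fin k → ℤ)) ↑D := by
    intro u₁ h1 u₂ h2 h
    exact hinj u₁ u₂ (hDmem u₁ h1) (hDmem u₂ h2) (fun _ => 0) (fun _ => 0)
      (by rw [hwt0]; omega) (by rw [hwt0]; omega) (by funext i; simpa using congrFun h i)
  calc (2:ℕ) ^ n = D.card := hDcard.symm
    _ ≤ hWfin.toFinset.card := Finset.card_le_card_of_injOn _ hmaps hinjOn
    _ = W.ncard := (Set.ncard_eq_toFinset_card W hWfin).symm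
    _ ≤ _ := hWn
end

section
/- Suppose M ∈ {0,...,q-1}^{p×s} is a signature code correcting t' errors (i.e., wt(Mz) > 2t' for every nonzero z ∈ {-1,0,1}^s arising from differences of binary vectors), and G ∈ {0,1}^{r×N} is a generator matrix of a binary linear code. If for each column block the decoding recovers all inner products M_{(i)}·v^{(j)} for all but at most t' indices i, then the full binary vector v ∈ {0,1}^{rs} can be uniquely recovered from B·v + e where B = Ḡᵀ ⊗ M (Kronecker product over the integers), provided wt(e) is small enough that at most t' of the p row-groups have more than the correctable number of errors. -/
/-- Unique recovery for the Kronecker-product construction `B = Ḡᵀ ⊗ M`: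
if `M` is a signature code correcting `t'` errors, and a decoder `D` recovers,
for all but at most `t'` of the row indices `i` of `M`, the vector of inner
products `w⁽ⁱ⁾ = (M_{(i)}·v⁽¹⁾, …, M_{(i)}·v⁽ʳ⁾)` from the corresponding
sub-vector of `B·v + e` (and likewise for `v'` and `e'`), then `v = v'`,
i.e. the binary vector `v` is uniquely recoverable from `B·v + e`. -/
theorem kronecker_signature_recovery {p s r N t' q : ℕ}
    (M : Fin p → Fin s → ℕ) (hMq : ∀ i l, M i l < q)
    (hsig : ∀ z : Fin s → ℤ, (∀ l, z l = -1 ∨ z l = 0 ∨ z l = 1) → z ≠ 0 →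
      2 * t' < wtZ (fun i => ∑ l, (M i l : ℤ) * z l))
    (G : Fin r → Fin N → ℕ) (hG : ∀ j a, G j a ≤ 1)
    (D : (Fin N → ℤ) → (Fin r → ℤ))
    (v v' : Fin r → Fin s → ℕ)
    (hv : ∀ j l, v j l ≤ 1) (hv' : ∀ j l, v' j l ≤ 1)
    (e e' : Fin p → Fin N → ℤ)
    (J : Finset (Fin p)) (hJ : J.card ≤ t')
    (hdec : ∀ i ∉ J,
      D (fun a => (∑ j, (G j a : ℤ) * ∑ l, (M i l : ℤ) * v j l) + e i a) =
        fun j => ∑ l, (M i l : ℤ) * v j l)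
    (hdec' : ∀ i ∉ J,
      D (fun a => (∑ j, (G j a : ℤ) * ∑ l, (M i l : ℤ) * v' j l) + e' i a) =
        fun j => ∑ l, (M i l : ℤ) * v' j l)
    (hobs : (fun (i : Fin p) (a : Fin N) =>
        (∑ j, (G j a : ℤ) * ∑ l, (M i l : ℤ) * v j l) + e i a) =
      fun (i : Fin p) (a : Fin N) =>
        (∑ j, (G j a : ℤ) * ∑ l, (M i l : ℤ) * v' j l) + e' i a) :
    v = v' := by
  -- For i ∉ J, the decoder gives equal inner products for v and v'.
  have key : ∀ i ∉ J, ∀ j, (∑ l, (M i l : ℤ) * v j l) = ∑ l, (M i l : ℤ) * v' j l := by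
    intro i hi j
    have h1 := hdec i hi
    have h2 := hdec' i hi
    have : (fun a => (∑ j, (G j a : ℤ) * ∑ l, (M i l : ℤ) * v j l) + e i a) =
        fun a => (∑ j, (G j a : ℤ) * ∑ l, (M i l : ℤ) * v' j l) + e' i a := by
      funext a; exact congrFun (congrFun hobs i) a
    rw [this, h2] at h1
    exact (congrFun h1 j).symm
  funext j
  by_contra hne
  set z : Fin s → ℤ := fun l => (v' j l : ℤ) - v j l with hz
  have hz01 : ∀ l, z l = -1 ∨ z l = 0 ∨ z l = 1 := by
    intro l
    have h1 := hv j l; have h2 := hv' j l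
    interval_cases h : v j l <;> interval_cases h' : v' j l <;> simp [hz, h, h']
  have hzne : z ≠ 0 := by
    intro h0
    apply hne
    funext l
    have := congrFun h0 l
    simp only [hz, Pi.zero_apply, sub_eq_zero] at this
    exact_mod_cast this.symm
  have hw := hsig z hz01 hzne
  -- The support of M·z is contained in J.
  have hsub : (Finset.univ.filter (fun i => (∑ l, (M i l : ℤ) * z l) ≠ 0)) ⊆ J := by
    intro i hi
    simp only [Finset.mem_filter] at hi
    by_contra hiJ
    apply hi.2
    have := key i hiJ j
    simp only [hz, mul_sub]
    rw [Finset.sum_sub_distrib, this, sub_self]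
  have : wtZ (fun i => ∑ l, (M i l : ℤ) * z l) ≤ t' :=
    le_trans (Finset.card_le_card hsub) hJ
  omega
end
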